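/- arXiv:1608.04508 — 5 statements merged into one kernel-verified Lean document; each statement's English description precedes it below -/
import Mathlib

section
/- The Choi–Jamiołkowski matrix J_α of the channel N_α(ρ) = E_α ρ E_α† + D_α ρ D_α† equals (1+sin²α)|u_α⟩⟨u_α| + (1+cos²α)|v_α⟩⟨v_α|, where |u_α⟩ = (sin α |10⟩ + |21⟩)/√(1+sin²α) and |v_α⟩ = (cos α |12⟩ + |01⟩)/√(1+cos²α). -/
open Matrix Kronecker Complex ComplexOrder

noncomputable section

abbrev M3 : Type := Matrix (Fin 3) (Fin 3) ℂ
abbrev M9 : Type := Matrix (Fin 3 × Fin 3) (Fin 3 × Fin 3) ℂ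

/-- |i⟩⟨j| on ℂ³ -/
def ket (i j : Fin 3) : M3 := Matrix.single i j 1

def E (α : ℝ) : M3 := (Real.sin α : ℂ) • ket 0 1 + ket 1 2
def D (α : ℝ) : M3 := (Real.cos α : ℂ) • ket 2 1 + ket 1 0

def u (α : ℝ) : Fin 3 × Fin 3 → ℂ := fun p =>
  (((if p = (1,0) then Real.sin α else 0) + (if p = (2,1) then 1 else 0)) /
    Real.sqrt (1 + Real.sin α ^ 2) : ℝ)

def v (α : ℝ) : Fin 3 × Fin 3 → ℂ := fun p =>
  (((if p = (1,2) then Real.cos α else 0) + (if p = (0,1) then 1 else 0)) /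
    Real.sqrt (1 + Real.cos α ^ 2) : ℝ)

/-- Projection onto span{|u_α⟩, |v_α⟩}, the support of the Choi matrix of N_α. -/
def Pproj (α : ℝ) : M9 :=
  vecMulVec (u α) (star (u α)) + vecMulVec (v α) (star (v α))

/-- Partial trace over the first (A) factor. -/
def trA (M : M9) : M3 := fun i j => ∑ k, M (k, i) (k, j)

/-- Partial trace over the second (B) factor. -/
def trB (M : M9) : M3 := fun i j => ∑ k, M (i, k) (j, k)

def Nmap (α : ℝ) (ρ : M3) : M3 := E α * ρ * (E α)ᴴ + D α * ρ * (D α)ᴴ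

/-- Choi–Jamiołkowski matrix of N_α. -/
def Choi (α : ℝ) : M9 := ∑ i, ∑ j, (ket i j ⊗ₖ Nmap α (ket i j))


lemma sbm (i j a b : Fin 3) (c : ℂ) :
    Matrix.single i j c a b = if i = a ∧ j = b then c else 0 := rfl

lemma choi_apply (α : ℝ) (a b c d : Fin 3) :
    Choi α (a,b) (c,d) = E α b a * (starRingEnd ℂ) (E α d c)
      + D α b a * (starRingEnd ℂ) (D α d c) := by
  have h1 : Choi α (a,b) (c,d) = Nmap α (ket a c) b d := by
    simp [Choi, Matrix.sum_apply, kroneckerMap_apply, ket, sbm,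
      ite_and, Finset.sum_ite_eq, Finset.sum_ite_eq']
  rw [h1]
  simp [Nmap, Matrix.mul_apply, ket, sbm, Matrix.conjTranspose_apply,
    ite_and, Finset.sum_ite_eq, Finset.sum_ite_eq', Fin.sum_univ_three]

def uw (α : ℝ) (p : Fin 3 × Fin 3) : ℝ :=
  (if p = (1,0) then Real.sin α else 0) + (if p = (2,1) then 1 else 0)
def vw (α : ℝ) (p : Fin 3 × Fin 3) : ℝ :=
  (if p = (1,2) then Real.cos α else 0) + (if p = (0,1) then 1 else 0)

lemma keyR (t x y : ℝ) (ht : 0 < t) :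
    t * (x / Real.sqrt t * (y / Real.sqrt t)) = x * y := by
  rw [div_mul_div_comm, Real.mul_self_sqrt ht.le]
  field_simp

lemma hu (α : ℝ) (p q : Fin 3 × Fin 3) :
    ((1 + Real.sin α ^ 2 : ℝ) : ℂ) * (u α p * star (u α q)) = ((uw α p * uw α q : ℝ) : ℂ) := by
  have h : u α p * star (u α q)
      = ((uw α p / Real.sqrt (1 + Real.sin α ^ 2)
          * (uw α q / Real.sqrt (1 + Real.sin α ^ 2)) : ℝ) : ℂ) := by
    simp [u, uw, Complex.conj_ofReal]
  rw [h, ← Complex.ofReal_mul, keyR _ _ _ (by positivity)]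

lemma hv (α : ℝ) (p q : Fin 3 × Fin 3) :
    ((1 + Real.cos α ^ 2 : ℝ) : ℂ) * (v α p * star (v α q)) = ((vw α p * vw α q : ℝ) : ℂ) := by
  have h : v α p * star (v α q)
      = ((vw α p / Real.sqrt (1 + Real.cos α ^ 2)
          * (vw α q / Real.sqrt (1 + Real.cos α ^ 2)) : ℝ) : ℂ) := by
    simp [v, vw, Complex.conj_ofReal]
  rw [h, ← Complex.ofReal_mul, keyR _ _ _ (by positivity)]

set_option maxHeartbeats 2000000 in
theorem choi_eq (α : ℝ) (hα : 0 < α) (hα' : α ≤ Real.pi / 4) :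
    Choi α = ((1 + Real.sin α ^ 2 : ℝ) : ℂ) • vecMulVec (u α) (star (u α)) +
      ((1 + Real.cos α ^ 2 : ℝ) : ℂ) • vecMulVec (v α) (star (v α)) := by
  ext ⟨a,b⟩ ⟨c,d⟩
  rw [choi_apply]
  simp only [Matrix.add_apply, Matrix.smul_apply, Matrix.vecMulVec_apply, Pi.star_apply,
    smul_eq_mul, hu, hv]
  fin_cases a <;> fin_cases b <;> fin_cases c <;> fin_cases d <;>
    simp [E, D, ket, sbm, uw, vw, Complex.conj_ofReal, Prod.ext_iff, Fin.ext_iff,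
      smul_eq_mul] <;>
    push_cast <;> try ring_nf
  all_goals simp [← Complex.ofReal_cos, ← Complex.ofReal_sin, Complex.conj_ofReal]
end
end

section
/- For 0 < α ≤ π/4, let R_A = 2(cos²α |0⟩⟨0| + |1⟩⟨1| + sin²α |2⟩⟨2|) and U_{AB} = cos²α |01⟩⟨01| + sin²α |21⟩⟨21| + |10⟩⟨10| + |12⟩⟨12| + sin α (|10⟩⟨21| + |21⟩⟨10|) + cos α (|01⟩⟨12| + |12⟩⟨01|). Then U_{AB} ≥ 0, R_A ⊗ I − U_{AB} ≥ 0, tr_A U_{AB} = I_B, and P_α (R_A ⊗ I_B − U_{AB}) = 0, where P_α is the projection onto the support of the Choi matrix of N_α. Moreover tr R_A = 4. -/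
open Matrix Kronecker Complex ComplexOrder

noncomputable section

def RA (α : ℝ) : M3 :=
  (2 * Real.cos α ^ 2 : ℂ) • ket 0 0 + (2 : ℂ) • ket 1 1 + (2 * Real.sin α ^ 2 : ℂ) • ket 2 2

def UAB (α : ℝ) : M9 :=
  (Real.cos α ^ 2 : ℂ) • (ket 0 0 ⊗ₖ ket 1 1) + (Real.sin α ^ 2 : ℂ) • (ket 2 2 ⊗ₖ ket 1 1) +
  ket 1 1 ⊗ₖ ket 0 0 + ket 1 1 ⊗ₖ ket 2 2 +
  (Real.sin α : ℂ) • (ket 1 2 ⊗ₖ ket 0 1 + ket 2 1 ⊗ₖ ket 1 0) +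
  (Real.cos α : ℂ) • (ket 0 1 ⊗ₖ ket 1 2 + ket 1 0 ⊗ₖ ket 2 1)

/-- Rows of the Gram decomposition of `UAB`. -/
def W1 (α : ℝ) : Matrix (Fin 2) (Fin 3 × Fin 3) ℂ := Matrix.of fun k p =>
  if k = 0 then (if p = (0,1) then (Real.cos α : ℂ) else if p = (1,2) then 1 else 0)
  else (if p = (1,0) then 1 else if p = (2,1) then (Real.sin α : ℂ) else 0)

/-- Rows of the Gram decomposition of the off-diagonal part of `RA ⊗ 1 - UAB`. -/
def W2 (α : ℝ) : Matrix (Fin 2) (Fin 3 × Fin 3) ℂ := Matrix.of fun k p =>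
  if k = 0 then (if p = (0,1) then (Real.cos α : ℂ) else if p = (1,2) then -1 else 0)
  else (if p = (1,0) then 1 else if p = (2,1) then -(Real.sin α : ℂ) else 0)

/-- Diagonal part of `RA ⊗ 1 - UAB`. -/
def dd (α : ℝ) : Fin 3 × Fin 3 → ℂ := fun p =>
  (if p = (0,0) ∨ p = (0,2) then (2 * Real.cos α ^ 2 : ℂ) else 0) +
  (if p = (1,1) then (2 : ℂ) else 0) +
  (if p = (2,0) ∨ p = (2,2) then (2 * Real.sin α ^ 2 : ℂ) else 0)

set_option maxHeartbeats 2000000 in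
lemma UAB_eq (α : ℝ) : UAB α = (W1 α)ᴴ * W1 α := by
  ext p q
  obtain ⟨i, j⟩ := p
  obtain ⟨k, l⟩ := q
  simp only [UAB, W1, ket, Matrix.mul_apply, Fin.sum_univ_two, Matrix.conjTranspose_apply,
    Matrix.add_apply, Matrix.smul_apply, Matrix.kroneckerMap_apply, Matrix.single,
    Matrix.of_apply, smul_eq_mul, Prod.mk.injEq, apply_ite (starRingEnd ℂ), _root_.map_one,
    _root_.map_zero, Complex.conj_ofReal, mul_ite, ite_mul, mul_one, one_mul, mul_zero,
    zero_mul, add_zero, zero_add]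
  fin_cases i <;> fin_cases j <;> fin_cases k <;> fin_cases l <;>
    norm_num [Fin.ext_iff, Complex.conj_ofReal, -Complex.ofReal_cos, -Complex.ofReal_sin] <;>
    ring_nf

set_option maxHeartbeats 2000000 in
lemma slack_eq (α : ℝ) :
    RA α ⊗ₖ (1 : M3) - UAB α = Matrix.diagonal (dd α) + (W2 α)ᴴ * W2 α := by
  ext p q
  obtain ⟨i, j⟩ := p
  obtain ⟨k, l⟩ := q
  simp only [UAB, RA, W2, dd, ket, Matrix.mul_apply, Fin.sum_univ_two, Matrix.conjTranspose_apply,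
    Matrix.sub_apply, Matrix.add_apply, Matrix.smul_apply, Matrix.kroneckerMap_apply,
    Matrix.single, Matrix.diagonal_apply, Matrix.one_apply,
    Matrix.of_apply, smul_eq_mul, Prod.mk.injEq, apply_ite (starRingEnd ℂ), _root_.map_one,
    _root_.map_zero, map_neg, Complex.conj_ofReal, mul_ite, ite_mul, mul_one, one_mul, mul_zero,
    zero_mul, add_zero, zero_add]
  fin_cases i <;> fin_cases j <;> fin_cases k <;> fin_cases l <;>
    norm_num [Fin.ext_iff, Complex.conj_ofReal, -Complex.ofReal_cos, -Complex.ofReal_sin] <;>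
    ring_nf

lemma dd_nonneg (α : ℝ) : ∀ p, 0 ≤ dd α p := by
  intro p
  have e1 : (2 * (Real.cos α : ℂ) ^ 2) = ((2 * Real.cos α ^ 2 : ℝ) : ℂ) := by push_cast; ring
  have e2 : (2 * (Real.sin α : ℂ) ^ 2) = ((2 * Real.sin α ^ 2 : ℝ) : ℂ) := by push_cast; ring
  have h1 : (0:ℂ) ≤ 2 * (Real.cos α : ℂ) ^ 2 := by
    rw [e1]; exact Complex.zero_le_real.mpr (by positivity)
  have h2 : (0:ℂ) ≤ 2 * (Real.sin α : ℂ) ^ 2 := by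
    rw [e2]; exact Complex.zero_le_real.mpr (by positivity)
  have h3 : (0:ℂ) ≤ 2 := by norm_num
  unfold dd
  split_ifs <;> simp_all <;> positivity

lemma vecMulVec_mul' (a b : Fin 3 × Fin 3 → ℂ) (M : M9) :
    vecMulVec a b * M = vecMulVec a (b ᵥ* M) := by
  ext p q
  simp only [Matrix.mul_apply, Matrix.vecMulVec_apply, Matrix.vecMul, dotProduct,
    Finset.mul_sum, mul_assoc]

set_option maxHeartbeats 2000000 in
lemma u_annihilates (α : ℝ) :
    star (u α) ᵥ* (RA α ⊗ₖ (1 : M3) - UAB α) = 0 := by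
  funext q
  obtain ⟨k, l⟩ := q
  simp only [Matrix.vecMul, dotProduct, Fintype.sum_prod_type, Fin.sum_univ_three,
    Pi.star_apply, u, RA, UAB, ket, Matrix.sub_apply, Matrix.add_apply, Matrix.smul_apply,
    Matrix.kroneckerMap_apply, Matrix.single, Matrix.one_apply, Matrix.of_apply,
    smul_eq_mul, Prod.mk.injEq, Pi.zero_apply]
  fin_cases k <;> fin_cases l <;>
    norm_num [Fin.ext_iff, Complex.conj_ofReal, -Complex.ofReal_cos, -Complex.ofReal_sin] <;>
    ring_nf

set_option maxHeartbeats 2000000 in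
lemma v_annihilates (α : ℝ) :
    star (v α) ᵥ* (RA α ⊗ₖ (1 : M3) - UAB α) = 0 := by
  funext q
  obtain ⟨k, l⟩ := q
  simp only [Matrix.vecMul, dotProduct, Fintype.sum_prod_type, Fin.sum_univ_three,
    Pi.star_apply, v, RA, UAB, ket, Matrix.sub_apply, Matrix.add_apply, Matrix.smul_apply,
    Matrix.kroneckerMap_apply, Matrix.single, Matrix.one_apply, Matrix.of_apply,
    smul_eq_mul, Prod.mk.injEq, Pi.zero_apply]
  fin_cases k <;> fin_cases l <;>
    norm_num [Fin.ext_iff, Complex.conj_ofReal, -Complex.ofReal_cos, -Complex.ofReal_sin] <;>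
    ring_nf

set_option maxHeartbeats 1000000 in
lemma trA_UAB (α : ℝ) : trA (UAB α) = 1 := by
  ext i j
  simp only [trA, UAB, ket, Fin.sum_univ_three, Matrix.add_apply, Matrix.smul_apply,
    Matrix.kroneckerMap_apply, Matrix.single, Matrix.one_apply, Matrix.of_apply,
    smul_eq_mul, Prod.mk.injEq]
  fin_cases i <;> fin_cases j <;>
    norm_num [Fin.ext_iff] <;>
    linear_combination (Complex.sin_sq_add_cos_sq (α : ℂ))

set_option maxHeartbeats 1000000 in
lemma trace_RA (α : ℝ) : (RA α).trace = 4 := by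
  simp only [Matrix.trace, Matrix.diag, RA, ket, Fin.sum_univ_three, Matrix.add_apply,
    Matrix.smul_apply, Matrix.single, Matrix.of_apply, smul_eq_mul, Prod.mk.injEq]
  norm_num [Fin.ext_iff]
  linear_combination (2 : ℂ) * (Complex.sin_sq_add_cos_sq (α : ℂ))

theorem ns_capacity_feasible (α : ℝ) (hα : 0 < α) (hα' : α ≤ Real.pi / 4) :
    (UAB α).PosSemidef ∧
    (RA α ⊗ₖ (1 : M3) - UAB α).PosSemidef ∧
    trA (UAB α) = 1 ∧
    Pproj α * (RA α ⊗ₖ (1 : M3) - UAB α) = 0 ∧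
    (RA α).trace = 4 := by
  refine ⟨?_, ?_, trA_UAB α, ?_, trace_RA α⟩
  · rw [UAB_eq α]
    exact Matrix.posSemidef_conjTranspose_mul_self _
  · rw [slack_eq α]
    exact ((Matrix.posSemidef_diagonal_iff).mpr (dd_nonneg α)).add
      (Matrix.posSemidef_conjTranspose_mul_self _)
  · rw [Pproj, add_mul, vecMulVec_mul', vecMulVec_mul', u_annihilates, v_annihilates]
    ext p q
    simp [Matrix.vecMulVec_apply]
end
end

section
/- Weak duality between zero-error capacity and simulation cost: for any quantum channel N with Choi matrix J_{AB} and support projection P_{AB}, if (R_A, U_{AB}) satisfies 0 ≤ U_{AB} ≤ R_A ⊗ I_B, tr_A U_{AB} = I_B, tr P_{AB}(R_A ⊗ I_B − U_{AB}) = 0, and T_B ≥ 0 satisfies I_A ⊗ T_B ≥ J_{AB}, then tr R_A ≤ tr T_B. -/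
open Matrix Kronecker Complex ComplexOrder

noncomputable section

/-- Partial trace over the first factor. -/
def trAg {a b : Type*} [Fintype a] (M : Matrix (a × b) (a × b) ℂ) : Matrix b b ℂ :=
  fun i j => ∑ k, M (k, i) (k, j)

/-- Partial trace over the second factor. -/
def trBg {a b : Type*} [Fintype b] (M : Matrix (a × b) (a × b) ℂ) : Matrix a a ℂ :=
  fun i j => ∑ k, M (i, k) (j, k)

lemma trace_conj_nonneg {m n : Type*} [Fintype m] [Fintype n]
    (A : Matrix m n ℂ) : 0 ≤ (Aᴴ * A).trace := by
  simp only [Matrix.trace, Matrix.diag, Matrix.mul_apply, Matrix.conjTranspose_apply]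
  refine Finset.sum_nonneg fun j _ => Finset.sum_nonneg fun i _ => ?_
  exact star_mul_self_nonneg _

lemma trace_conj_eq_zero {m n : Type*} [Fintype m] [Fintype n] [DecidableEq m] [DecidableEq n]
    (A : Matrix m n ℂ) (h : (Aᴴ * A).trace = 0) : A = 0 := by
  rw [← Matrix.conjTranspose_mul_self_eq_zero (A := A)]
  ext j k
  simp only [Matrix.trace, Matrix.diag, Matrix.mul_apply, Matrix.conjTranspose_apply] at h
  have := (Finset.sum_eq_zero_iff_of_nonneg
    (fun j _ => Finset.sum_nonneg fun i _ => star_mul_self_nonneg (A i j))).mp h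
  have h2 := this k (Finset.mem_univ k)
  have := (Finset.sum_eq_zero_iff_of_nonneg
    (fun i _ => star_mul_self_nonneg (A i k))).mp h2
  simp only [Matrix.mul_apply, Matrix.conjTranspose_apply, Matrix.zero_apply]
  refine Finset.sum_eq_zero fun i _ => ?_
  have h3 := this i (Finset.mem_univ i)
  rcases mul_eq_zero.mp h3 with h4 | h4
  · have : A i k = 0 := by simpa using congrArg star h4
    simp [this]
  · simp [h4]

open scoped MatrixOrder in
lemma psd_eq_conjTranspose_mul_self {n : Type*} [Fintype n] [DecidableEq n]
    {A : Matrix n n ℂ} (h : A.PosSemidef) : ∃ B : Matrix n n ℂ, A = Bᴴ * B := by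
  obtain ⟨B, hB⟩ := CStarAlgebra.nonneg_iff_eq_star_mul_self.mp h.nonneg
  exact ⟨B, hB⟩

lemma trace_mul_psd_nonneg {n : Type*} [Fintype n] [DecidableEq n]
    {A B : Matrix n n ℂ} (hA : A.PosSemidef) (hB : B.PosSemidef) :
    0 ≤ (A * B).trace := by
  obtain ⟨C, rfl⟩ := psd_eq_conjTranspose_mul_self hA
  obtain ⟨D, rfl⟩ := psd_eq_conjTranspose_mul_self hB
  have : (Cᴴ * C * (Dᴴ * D)).trace = ((C * Dᴴ)ᴴ * (C * Dᴴ)).trace := by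
    rw [Matrix.conjTranspose_mul, Matrix.conjTranspose_conjTranspose]
    rw [show Cᴴ * C * (Dᴴ * D) = (Cᴴ * C * Dᴴ) * D by simp only [mul_assoc],
        Matrix.trace_mul_comm, mul_assoc, mul_assoc]
  rw [this]
  exact trace_conj_nonneg _

lemma trace_kron_left {a b : ℕ} (R : Matrix (Fin a) (Fin a) ℂ)
    (J : Matrix (Fin a × Fin b) (Fin a × Fin b) ℂ) :
    ((R ⊗ₖ (1 : Matrix (Fin b) (Fin b) ℂ)) * J).trace = (R * trBg J).trace := by
  simp only [Matrix.trace, Matrix.diag, Matrix.mul_apply, Matrix.kroneckerMap_apply,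
    Matrix.one_apply, trBg, Fintype.sum_prod_type]
  simp only [mul_ite, mul_one, mul_zero, ite_mul, zero_mul, one_mul, Finset.sum_ite_eq,
    Finset.sum_ite_eq', Finset.sum_ite_irrel, Finset.sum_const_zero, Finset.mem_univ, if_true, Finset.mul_sum]
  refine Finset.sum_congr rfl fun i _ => ?_
  rw [Finset.sum_comm]

lemma trace_kron_right {a b : ℕ} (T : Matrix (Fin b) (Fin b) ℂ)
    (U : Matrix (Fin a × Fin b) (Fin a × Fin b) ℂ) :
    (((1 : Matrix (Fin a) (Fin a) ℂ) ⊗ₖ T) * U).trace = (T * trAg U).trace := by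
  simp only [Matrix.trace, Matrix.diag, Matrix.mul_apply, Matrix.kroneckerMap_apply,
    Matrix.one_apply, trAg, Fintype.sum_prod_type]
  simp only [mul_ite, mul_one, mul_zero, ite_mul, zero_mul, one_mul, Finset.sum_ite_eq,
    Finset.sum_ite_eq', Finset.sum_ite_irrel, Finset.sum_const_zero, Finset.mem_univ, if_true, Finset.mul_sum]
  rw [Finset.sum_comm]
  refine Finset.sum_congr rfl fun k _ => ?_
  rw [Finset.sum_comm]

/-- Weak duality between the NS-assisted zero-error capacity SDP and the
simulation-cost SDP, for any channel with Choi matrix `J` (CP: `J ≥ 0`,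
TP: `tr_B J = I_A`) and support projection `P`. -/
theorem capacity_le_simulation {a b : ℕ}
    (J P : Matrix (Fin a × Fin b) (Fin a × Fin b) ℂ)
    (hJ : J.PosSemidef) (hTP : trBg J = 1)
    (hPherm : P.IsHermitian) (hPproj : P * P = P)
    (hPsupp : LinearMap.range (Matrix.toLin' P) = LinearMap.range (Matrix.toLin' J))
    (R : Matrix (Fin a) (Fin a) ℂ) (U : Matrix (Fin a × Fin b) (Fin a × Fin b) ℂ)
    (T : Matrix (Fin b) (Fin b) ℂ)
    (hU : U.PosSemidef)
    (hRU : (R ⊗ₖ (1 : Matrix (Fin b) (Fin b) ℂ) - U).PosSemidef)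
    (hUtr : trAg U = 1)
    (hPRU : (P * (R ⊗ₖ (1 : Matrix (Fin b) (Fin b) ℂ) - U)).trace = 0)
    (hT : T.PosSemidef)
    (hTJ : ((1 : Matrix (Fin a) (Fin a) ℂ) ⊗ₖ T - J).PosSemidef) :
    (R.trace).re ≤ (T.trace).re := by
  set D := R ⊗ₖ (1 : Matrix (Fin b) (Fin b) ℂ) - U with hD
  obtain ⟨B, hB⟩ := psd_eq_conjTranspose_mul_self hRU
  have hPD : ((B * P)ᴴ * (B * P)).trace = 0 := by
    rw [Matrix.conjTranspose_mul, hPherm.eq]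
    calc (P * Bᴴ * (B * P)).trace = ((P * (Bᴴ * B)) * P).trace := by
            simp only [mul_assoc]
      _ = (P * (P * (Bᴴ * B))).trace := Matrix.trace_mul_comm _ _
      _ = ((P * P) * (Bᴴ * B)).trace := by simp only [mul_assoc]
      _ = (P * D).trace := by rw [hPproj, ← hB]
      _ = 0 := hPRU
  have hBP : B * P = 0 := trace_conj_eq_zero _ hPD
  have hDP : D * P = 0 := by rw [hB, mul_assoc, hBP, mul_zero]
  have hDJ : D * J = 0 := by
    apply Matrix.toLin'.injective
    refine LinearMap.ext fun x => ?_
    have hJx : Matrix.toLin' J x ∈ LinearMap.range (Matrix.toLin' P) := by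
      rw [hPsupp]; exact LinearMap.mem_range_self _ x
    obtain ⟨y, hy⟩ := hJx
    simp only [Matrix.toLin'_apply] at hy ⊢
    rw [← Matrix.mulVec_mulVec, ← hy, Matrix.mulVec_mulVec, hDP, Matrix.zero_mulVec, Matrix.zero_mulVec]
  have h1 : R.trace = (U * J).trace := by
    calc R.trace = (R * trBg J).trace := by rw [hTP, mul_one]
      _ = ((R ⊗ₖ (1 : Matrix (Fin b) (Fin b) ℂ)) * J).trace := (trace_kron_left R J).symm
      _ = (U * J + D * J).trace := by rw [hD, sub_mul]; congr 1; abel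
      _ = (U * J).trace := by rw [hDJ, add_zero]
  have h2 : T.trace = (J * U).trace
      + ((((1 : Matrix (Fin a) (Fin a) ℂ) ⊗ₖ T) - J) * U).trace := by
    calc T.trace = (T * trAg U).trace := by rw [hUtr, mul_one]
      _ = (((1 : Matrix (Fin a) (Fin a) ℂ) ⊗ₖ T) * U).trace := (trace_kron_right T U).symm
      _ = (J * U + (((1 : Matrix (Fin a) (Fin a) ℂ) ⊗ₖ T) - J) * U).trace := by
            rw [sub_mul]; congr 1; abel
      _ = _ := Matrix.trace_add _ _
  have h3 : 0 ≤ ((((1 : Matrix (Fin a) (Fin a) ℂ) ⊗ₖ T) - J) * U).trace :=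
    trace_mul_psd_nonneg hTJ hU
  have h4 : (J * U).trace = (U * J).trace := Matrix.trace_mul_comm _ _
  have hle : R.trace ≤ T.trace := by
    rw [h1, h2, h4]
    exact le_add_of_nonneg_right h3
  exact (Complex.le_def.mp hle).1
end
end

section
/- For 0 < α ≤ π/4, the four operators E_α† E_α, E_α† D_α, D_α† E_α, D_α† D_α are linearly independent over C, where E_α = sin α |0⟩⟨1| + |1⟩⟨2| and D_α = cos α |2⟩⟨1| + |1⟩⟨0| (hence the channel N_α is extremal). -/
open Matrix Kronecker Complex ComplexOrder

noncomputable section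

theorem kraus_products_linearIndependent (α : ℝ) (hα : 0 < α) (hα' : α ≤ Real.pi / 4) :
    LinearIndependent ℂ
      ![(E α)ᴴ * E α, (E α)ᴴ * D α, (D α)ᴴ * E α, (D α)ᴴ * D α] := by
  rw [Fintype.linearIndependent_iff]
  intro g hg
  have key : ∀ i j : Fin 3,
      (∑ k : Fin 4, g k • ![(E α)ᴴ * E α, (E α)ᴴ * D α, (D α)ᴴ * E α, (D α)ᴴ * D α] k) i j = 0 := by
    intro i j; rw [hg]; rfl
  have e22 := key 2 2
  have e00 := key 0 0
  have e20 := key 2 0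
  have e02 := key 0 2
  simp [Fin.sum_univ_four, E, D, ket, Matrix.mul_apply, Fin.sum_univ_three,
    Matrix.sum_apply, Matrix.smul_apply, Matrix.add_apply, Matrix.conjTranspose_apply,
    Matrix.single] at e22 e00 e20 e02
  intro i; fin_cases i <;> simp_all
end
end

section
/- The primal feasible solution (ρ, T) of the quantum Lovász number SDP for N_α achieves value ⟨Φ|(I ⊗ ρ + T)|Φ⟩ = 2 + cos²α + 1/cos²α, where |Φ⟩ = |00⟩ + |11⟩ + |22⟩, ρ = (cos²α |0⟩⟨0| + |1⟩⟨1|)/(1+cos²α), T = T₁ ⊗ T₂ + R with T₁ = (1/(1+cos²α))(|0⟩⟨0| − sec²α |1⟩⟨1| + tan²α |2⟩⟨2|), T₂ = cos⁴α |0⟩⟨0| − |1⟩⟨1|, R = |00⟩⟨11| + |11⟩⟨00|. -/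
open Matrix Kronecker Complex ComplexOrder

noncomputable section

def Phi : Fin 3 × Fin 3 → ℂ := fun p => if p.1 = p.2 then 1 else 0

def ρmat (α : ℝ) : M3 :=
  ((Real.cos α ^ 2 / (1 + Real.cos α ^ 2) : ℝ) : ℂ) • ket 0 0 +
  ((1 / (1 + Real.cos α ^ 2) : ℝ) : ℂ) • ket 1 1

def T1 (α : ℝ) : M3 :=
  ((1 / (1 + Real.cos α ^ 2) : ℝ) : ℂ) •
    (ket 0 0 - (1 / Real.cos α ^ 2 : ℂ) • ket 1 1 + (Real.sin α ^ 2 / Real.cos α ^ 2 : ℂ) • ket 2 2)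

def T2 (α : ℝ) : M3 := (Real.cos α ^ 4 : ℂ) • ket 0 0 - ket 1 1

def Tmat (α : ℝ) : M9 := T1 α ⊗ₖ T2 α + (ket 0 1 ⊗ₖ ket 0 1 + ket 1 0 ⊗ₖ ket 1 0)

theorem lovasz_primal_value (α : ℝ) (hα : 0 < α) (hα' : α ≤ Real.pi / 4) :
    star Phi ⬝ᵥ (((1 : M3) ⊗ₖ ρmat α + Tmat α) *ᵥ Phi) =
      ((2 + Real.cos α ^ 2 + 1 / Real.cos α ^ 2 : ℝ) : ℂ) := by
  have hc : Real.cos α ≠ 0 := by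
    have := Real.cos_pos_of_mem_Ioo (show α ∈ Set.Ioo (-(Real.pi/2)) (Real.pi/2) from
      ⟨by linarith [Real.pi_pos], by linarith [Real.pi_pos]⟩)
    exact ne_of_gt this
  have h1 : (1 : ℝ) + Real.cos α ^ 2 ≠ 0 := by positivity
  have hs : Real.sin α ^ 2 = 1 - Real.cos α ^ 2 := by
    have := Real.sin_sq_add_cos_sq α; linarith
  simp only [Phi, ρmat, T1, T2, Tmat, ket, dotProduct, mulVec, Fintype.sum_prod_type,
    Fin.sum_univ_three, Matrix.kroneckerMap_apply, Matrix.add_apply, Matrix.smul_apply,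
    Matrix.sub_apply, Matrix.one_apply, Matrix.single, of_apply, Pi.star_apply,
    hs]
  norm_num
  push_cast [hs]
  have hc' : Complex.cos α ≠ 0 := by rw [← Complex.ofReal_cos]; exact_mod_cast hc
  have h1' : (1 : ℂ) + Complex.cos α ^ 2 ≠ 0 := by rw [← Complex.ofReal_cos]; exact_mod_cast h1
  field_simp
  simp only [false_and, ↓reduceIte]
  ring
end
end
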